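/- If Ω is the unit circle {v ∈ ℝ² | ‖v‖ = 1}, then for every v ∈ Ω the set of stable Ω-dense directions from v is empty: 𝒟^Ω_stab(v) = ∅. -/

import Mathlib

set_option maxHeartbeats 1000000


def IsDenseDir {m : ℕ} (Ω : Set (EuclideanSpace ℝ (Fin m)))
    (v v' : EuclideanSpace ℝ (Fin m)) : Prop :=
  ∀ ε > (0 : ℝ), ∃ α : ℝ, 0 < α ∧ α < ε ∧ α ≤ 1 ∧ v + α • (v' - v) ∈ Ω

def IsStableDenseDir {m : ℕ} (Ω : Set (EuclideanSpace ℝ (Fin m)))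
    (v v' : EuclideanSpace ℝ (Fin m)) : Prop :=
  ∃ ε > (0 : ℝ), ∀ v'' ∈ Metric.closedBall v ε ∩ Ω, IsDenseDir Ω v'' v'

lemma key_lemma (v'' v' : EuclideanSpace ℝ (Fin 2)) (h1 : ‖v''‖ = 1)
    (hne : v' ≠ v'')
    (hdd : IsDenseDir {w : EuclideanSpace ℝ (Fin 2) | ‖w‖ = 1} v'' v') : False := by
  set d := v' - v'' with hd
  have hd0 : d ≠ 0 := sub_ne_zero.mpr hne
  have hnd : (0:ℝ) < ‖d‖ ^ 2 := pow_pos (norm_pos_iff.mpr hd0) 2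
  have key : ∀ α : ℝ, 0 < α → ‖v'' + α • d‖ = 1 →
      α * ‖d‖ ^ 2 = -2 * inner ℝ v'' d := by
    intro α hα hn
    have hsq : ‖v'' + α • d‖ ^ 2 = ‖v''‖ ^ 2 + 2 * inner ℝ v'' (α • d) + ‖α • d‖ ^ 2 :=
      norm_add_sq_real _ _
    rw [hn, h1, real_inner_smul_right, norm_smul, Real.norm_eq_abs,
      abs_of_pos hα] at hsq
    have : α * (2 * inner ℝ v'' d + α * ‖d‖ ^ 2) = 0 := by nlinarith [hsq]
    have h3 : 2 * (inner ℝ v'' d : ℝ) + α * ‖d‖ ^ 2 = 0 := by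
      rcases mul_eq_zero.mp this with h | h
      · exact absurd h (ne_of_gt hα)
      · exact h
    linarith
  obtain ⟨α₁, hα₁0, _, _, hm₁⟩ := hdd 1 one_pos
  obtain ⟨α₂, hα₂0, hα₂lt, _, hm₂⟩ := hdd α₁ hα₁0
  have e1 := key α₁ hα₁0 hm₁
  have e2 := key α₂ hα₂0 hm₂
  have : α₁ = α₂ := by
    have : α₁ * ‖d‖ ^ 2 = α₂ * ‖d‖ ^ 2 := by rw [e1, e2]
    exact mul_right_cancel₀ (ne_of_gt hnd) this
  linarith

lemma exists_pt (a b : ℝ) : ∃ w : EuclideanSpace ℝ (Fin 2), w 0 = a ∧ w 1 = b :=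
  ⟨(WithLp.equiv 2 (Fin 2 → ℝ)).symm ![a, b], rfl, rfl⟩

lemma norm_sq_two (x : EuclideanSpace ℝ (Fin 2)) :
    ‖x‖ ^ 2 = (x 0) ^ 2 + (x 1) ^ 2 := by
  rw [EuclideanSpace.norm_eq]
  rw [Real.sq_sqrt (by positivity)]
  simp [Fin.sum_univ_two, sq_abs]

theorem stmt5 (v : EuclideanSpace ℝ (Fin 2))
    (hv : v ∈ {w : EuclideanSpace ℝ (Fin 2) | ‖w‖ = 1}) :
    {v' | IsStableDenseDir {w : EuclideanSpace ℝ (Fin 2) | ‖w‖ = 1} v v'} = ∅ := by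
  ext v'
  simp only [Set.mem_setOf_eq, Set.mem_empty_iff_false, iff_false]
  rintro ⟨ε, hε, h⟩
  have hv2 : (v 0) ^ 2 + (v 1) ^ 2 = 1 := by
    have := norm_sq_two v
    rw [hv] at this; linarith [this]
  by_cases hvv : v' = v
  · -- construct a rotated point w ≠ v on the circle within ε of v
    set θ : ℝ := min ε 1 with hθdef
    have hθ0 : 0 < θ := lt_min hε one_pos
    have hθ1 : θ ≤ 1 := min_le_right _ _
    set c : ℝ := Real.cos θ
    set s : ℝ := Real.sin θ
    have hcs : s ^ 2 + c ^ 2 = 1 := Real.sin_sq_add_cos_sq θ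
    -- 1 - cos θ bounds
    have hhalf : Real.sin (θ / 2) ^ 2 = 1 / 2 - c / 2 := by
      have := Real.sin_sq_eq_half_sub (θ / 2)
      rwa [show 2 * (θ / 2) = θ by ring] at this
    have hhalfpos : 0 < Real.sin (θ / 2) := by
      apply Real.sin_pos_of_pos_of_lt_pi (by linarith)
      have : (1:ℝ) / 2 < Real.pi := by have := Real.pi_gt_three; linarith
      linarith
    have hhalfle : Real.sin (θ / 2) ≤ θ / 2 := Real.sin_le (by linarith)
    have hclt : c < 1 := by nlinarith
    have hcbound : 2 - 2 * c ≤ θ ^ 2 := by nlinarith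
    obtain ⟨w, hw0, hw1⟩ := exists_pt (c * v 0 - s * v 1) (s * v 0 + c * v 1)
    have hwnorm : ‖w‖ = 1 := by
      have := norm_sq_two w
      rw [hw0, hw1] at this
      have h2 : ‖w‖ ^ 2 = 1 := by
        rw [this]
        linear_combination (v 0 ^ 2 + v 1 ^ 2) * hcs + hv2
      nlinarith [norm_nonneg w]
    have hwv0 : (w - v) 0 = c * v 0 - s * v 1 - v 0 := by
      simp [PiLp.sub_apply, hw0]
    have hwv1 : (w - v) 1 = s * v 0 + c * v 1 - v 1 := by
      simp [PiLp.sub_apply, hw1]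
    have hdist : ‖w - v‖ ≤ ε := by
      have h2 := norm_sq_two (w - v)
      rw [hwv0, hwv1] at h2
      have h3 : ‖w - v‖ ^ 2 = 2 - 2 * c := by
        rw [h2]
        linear_combination (v 0 ^ 2 + v 1 ^ 2) * hcs + (2 - 2 * c) * hv2
      have hθε : θ ≤ ε := min_le_left _ _
      nlinarith [norm_nonneg (w - v)]
    have hwne : w ≠ v := by
      intro hwv
      have h0 : c * v 0 - s * v 1 = v 0 := by rw [← hw0, hwv]
      have h1 : s * v 0 + c * v 1 = v 1 := by rw [← hw1, hwv]
      nlinarith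
    have hwmem : w ∈ Metric.closedBall v ε ∩ {w : EuclideanSpace ℝ (Fin 2) | ‖w‖ = 1} := by
      constructor
      · rw [Metric.mem_closedBall, dist_eq_norm]; exact hdist
      · exact hwnorm
    exact key_lemma w v' hwnorm (by rw [hvv]; exact fun hc => hwne hc.symm) (h w hwmem)
  · have hvmem : v ∈ Metric.closedBall v ε ∩ {w : EuclideanSpace ℝ (Fin 2) | ‖w‖ = 1} := by
      constructor
      · simp [hε.le]
      · exact hv
    exact key_lemma v v' hv hvv (h v hvmem)
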